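/- Let A be a bialgebra over a field k with comultiplication Δ, and let R be an invertible element of the algebra A ⊗ A such that (1) (τ∘Δ)(a) = R Δ(a) R⁻¹ for all a ∈ A, (2) (Δ ⊗ id)(R) = R₁₃R₂₃, and (3) (id ⊗ Δ)(R) = R₁₃R₁₂, where τ is the flip on A ⊗ A. Then R satisfies the quantum Yang–Baxter equation R₁₂R₁₃R₂₃ = R₂₃R₁₃R₁₂ in A ⊗ A ⊗ A. -/

import Mathlib

open scoped TensorProduct

/-- If `(A, R)` is a quasi-triangular bialgebra, i.e. `R ∈ A ⊗ A` is
invertible with `τ∘Δ = R Δ(·) R⁻¹`, `(Δ ⊗ id)(R) = R₁₃R₂₃` and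
`(id ⊗ Δ)(R) = R₁₃R₁₂`, then `R` satisfies the quantum Yang–Baxter equation
`R₁₂R₁₃R₂₃ = R₂₃R₁₃R₁₂` in `A ⊗ A ⊗ A`. -/
theorem quasitriangular_implies_QYBE
    (k : Type*) [Field k] (A : Type*) [Semiring A] [Bialgebra k A]
    (R Rinv : A ⊗[k] A)
    (hRinv : R * Rinv = 1) (hRinv' : Rinv * R = 1)
    -- the three embeddings `A ⊗ A → A ⊗ A ⊗ A`:
    (e12 e13 e23 : A ⊗[k] A →ₐ[k] A ⊗[k] (A ⊗[k] A))
    (he12 : e12 = Algebra.TensorProduct.map (AlgHom.id k A)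
      (Algebra.TensorProduct.includeLeft : A →ₐ[k] A ⊗[k] A))
    (he13 : e13 = Algebra.TensorProduct.map (AlgHom.id k A)
      (Algebra.TensorProduct.includeRight : A →ₐ[k] A ⊗[k] A))
    (he23 : e23 = (Algebra.TensorProduct.includeRight : A ⊗[k] A →ₐ[k] A ⊗[k] (A ⊗[k] A)))
    -- axiom (1): `(τ∘Δ)(a) = R Δ(a) R⁻¹`:
    (h1 : ∀ a : A, TensorProduct.comm k A A (Coalgebra.comul a)
      = R * Coalgebra.comul a * Rinv)
    -- axiom (2): `(Δ ⊗ id)(R) = R₁₃ R₂₃`: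
    (h2 : ((TensorProduct.assoc k A A A).toLinearMap ∘ₗ
        TensorProduct.map Coalgebra.comul LinearMap.id) R = e13 R * e23 R)
    -- axiom (3): `(id ⊗ Δ)(R) = R₁₃ R₁₂`:
    (h3 : (TensorProduct.map LinearMap.id Coalgebra.comul) R = e13 R * e12 R) :
    e12 R * e13 R * e23 R = e23 R * e13 R * e12 R := by
  classical
  -- `D = (Δ ⊗ id)` as an algebra hom into `A ⊗ (A ⊗ A)`
  set D : A ⊗[k] A →ₐ[k] A ⊗[k] (A ⊗[k] A) :=
    ((Algebra.TensorProduct.assoc k k k A A A).toAlgHom).comp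
      (Algebra.TensorProduct.map (Bialgebra.comulAlgHom k A) (AlgHom.id k A)) with hDdef
  -- `σ` swaps the first two tensor factors
  set σ : A ⊗[k] (A ⊗[k] A) →ₐ[k] A ⊗[k] (A ⊗[k] A) :=
    ((Algebra.TensorProduct.assoc k k k A A A).toAlgHom).comp
      ((Algebra.TensorProduct.map (Algebra.TensorProduct.comm k A A).toAlgHom
          (AlgHom.id k A)).comp
        (Algebra.TensorProduct.assoc k k k A A A).symm.toAlgHom) with hσdef
  -- h2 in terms of D
  have hDR : D R = e13 R * e23 R := by
    rw [← h2]
    have : (D : A ⊗[k] A →ₗ[k] A ⊗[k] (A ⊗[k] A)) =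
        (TensorProduct.assoc k A A A).toLinearMap ∘ₗ
          TensorProduct.map Coalgebra.comul LinearMap.id := by
      apply TensorProduct.ext'
      intro a b
      simp only [hDdef, AlgHom.toLinearMap_apply, AlgHom.coe_comp, Function.comp_apply,
        Algebra.TensorProduct.map_tmul, Bialgebra.comulAlgHom_apply, AlgHom.coe_id, id_eq,
        AlgEquiv.toAlgHom_eq_coe, AlgHom.coe_coe, LinearMap.coe_comp,
        TensorProduct.map_tmul, LinearMap.id_coe, LinearEquiv.coe_coe]
      rfl
    exact LinearMap.congr_fun this R
  -- σ ∘ e13 = e23 and σ ∘ e23 = e13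
  have hσ13 : ∀ x : A ⊗[k] A, σ (e13 x) = e23 x := by
    have : σ.comp e13 = e23 := by
      apply Algebra.TensorProduct.ext' (S := k)
      intro a b
      simp [hσdef, he13, he23]
    intro x; exact AlgHom.congr_fun this x
  have hσ23 : ∀ x : A ⊗[k] A, σ (e23 x) = e13 x := by
    have : σ.comp e23 = e13 := by
      apply Algebra.TensorProduct.ext' (S := k)
      intro a b
      simp [hσdef, he13, he23]
    intro x; exact AlgHom.congr_fun this x
  have hσ12 : ∀ x : A ⊗[k] A, σ (e12 x) = e12 ((TensorProduct.comm k A A) x) := by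
    intro x
    induction x using TensorProduct.induction_on with
    | zero => simp
    | tmul a b => simp [hσdef, he12]
    | add x y hx hy => simp [map_add, hx, hy]
  -- the element 1 ⊗ 1 ⊗ b commutes with e12 of anything
  have hcommut : ∀ (z : A ⊗[k] A) (b : A),
      ((1 : A) ⊗ₜ[k] ((1 : A) ⊗ₜ[k] b)) * e12 z = e12 z * ((1 : A) ⊗ₜ[k] ((1 : A) ⊗ₜ[k] b)) := by
    intro z b
    induction z using TensorProduct.induction_on with
    | zero => simp
    | tmul p q => simp [he12, Algebra.TensorProduct.tmul_mul_tmul]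
    | add x y hx hy => simp [map_add, mul_add, add_mul, hx, hy]
  -- the factorisation D(a ⊗ b) = e12 (Δ a) * (1 ⊗ 1 ⊗ b)
  have hfact : ∀ (y : A ⊗[k] A) (b : A),
      (Algebra.TensorProduct.assoc k k k A A A) (y ⊗ₜ[k] b)
        = e12 y * ((1 : A) ⊗ₜ[k] ((1 : A) ⊗ₜ[k] b)) := by
    intro y b
    induction y using TensorProduct.induction_on with
    | zero => simp
    | tmul p q => simp [he12, Algebra.TensorProduct.tmul_mul_tmul]
    | add x y hx hy =>
      simp only [TensorProduct.add_tmul, map_add, add_mul, hx, hy]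
  -- the conjugation identity: σ (D x) = e12 R * D x * e12 Rinv
  have hconj : ∀ x : A ⊗[k] A, σ (D x) = e12 R * D x * e12 Rinv := by
    intro x
    induction x using TensorProduct.induction_on with
    | zero => simp
    | tmul a b =>
      have hDab : D (a ⊗ₜ[k] b)
          = e12 (Coalgebra.comul a) * ((1 : A) ⊗ₜ[k] ((1 : A) ⊗ₜ[k] b)) := by
        simp only [hDdef, AlgHom.coe_comp, Function.comp_apply,
          Algebra.TensorProduct.map_tmul, Bialgebra.comulAlgHom_apply, AlgHom.coe_id,
          id_eq, AlgEquiv.toAlgHom_eq_coe, AlgHom.coe_coe]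
        exact hfact _ b
      have hσu : σ ((1 : A) ⊗ₜ[k] ((1 : A) ⊗ₜ[k] b)) = (1 : A) ⊗ₜ[k] ((1 : A) ⊗ₜ[k] b) := by
        simp [hσdef]
      rw [hDab, map_mul, hσ12, hσu]
      have h1' : (TensorProduct.comm k A A) (Coalgebra.comul a)
          = R * Coalgebra.comul a * Rinv := h1 a
      rw [h1', map_mul, map_mul]
      rw [mul_assoc (e12 R * e12 (Coalgebra.comul a)) (e12 Rinv) _, ← hcommut Rinv b]
      simp only [mul_assoc]
    | add x y hx hy =>
      simp only [map_add, hx, hy, mul_add, add_mul]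
  -- conclude
  have key : σ (D R) = e23 R * e13 R := by
    rw [hDR, map_mul, hσ13, hσ23]
  have : e12 R * D R = σ (D R) * e12 R := by
    rw [hconj R, mul_assoc, mul_assoc, ← map_mul, hRinv', map_one, mul_one]
  calc e12 R * e13 R * e23 R = e12 R * D R := by rw [mul_assoc, ← hDR]
    _ = σ (D R) * e12 R := this
    _ = e23 R * e13 R * e12 R := by rw [key]
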